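/- For N = 4, ζ_{U₄}(u) = ((u-1)(u³-1)) / ((u²-1)(u⁶-1)) and ζ_{U₄}(1/u) = u⁴ · ζ_{U₄}(u), so ζ_{U₄} is an absolute automorphic form of weight -4. -/

import Mathlib

/-- The `4 × 4` Grover algorithm matrix `U₄`. -/
noncomputable def groverU4 : Matrix (Fin 4) (Fin 4) ℝ :=
  (1 / 2 : ℝ) • !![1, 1, 1, 1; -1, -1, 1, 1; -1, 1, -1, 1; -1, 1, 1, -1]

/-- The matrix zeta function `ζ_{U₄}(u) = det(I₄ - u U₄)⁻¹`. -/
noncomputable def groverZeta4 (u : ℝ) : ℝ :=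
  (Matrix.det (1 - u • groverU4))⁻¹

/-- The characteristic determinant: `det(I₄ - u U₄) = (u+1)²(u²-u+1)`. -/
lemma groverDet4_eq (u : ℝ) :
    Matrix.det (1 - u • groverU4) = (u + 1) ^ 2 * (u ^ 2 - u + 1) := by
  have h1 : (1 : Matrix (Fin 4) (Fin 4) ℝ) - u • groverU4 =
      !![1 - u/2, -(u/2), -(u/2), -(u/2); u/2, 1 + u/2, -(u/2), -(u/2);
        u/2, -(u/2), 1 + u/2, -(u/2); u/2, -(u/2), -(u/2), 1 + u/2] := by
    ext i j
    fin_cases i <;> fin_cases j <;>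
      simp (config := { decide := true }) [groverU4, Matrix.one_apply, Matrix.vecHead,
        Matrix.vecTail, Function.comp] <;> ring
  rw [h1]
  rw [show ((u + 1) ^ 2 * (u ^ 2 - u + 1)) = 1 + u + u^3 + u^4 by ring]
  simp (config := { decide := true })
    [Matrix.det_succ_row_zero, Fin.sum_univ_succ, Fin.succAbove, Fin.ext_iff,
     Matrix.vecHead, Matrix.vecTail, Fin.castSucc, Fin.castAdd, Fin.castLE, Function.comp]
  ring

/-- `ζ_{U₄}(u) = (u-1)(u³-1)/((u²-1)(u⁶-1))` and `ζ_{U₄}(1/u) = u⁴ ζ_{U₄}(u)`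
(wherever defined), so `ζ_{U₄}` is an absolute automorphic form of weight `-4`. -/
theorem stmt_18 :
    (∀ u : ℝ, (u ^ 2 - 1) * (u ^ 6 - 1) ≠ 0 →
      groverZeta4 u = ((u - 1) * (u ^ 3 - 1)) / ((u ^ 2 - 1) * (u ^ 6 - 1))) ∧
    (∀ u : ℝ, u ≠ 0 → groverZeta4 u⁻¹ = u ^ 4 * groverZeta4 u) := by
  constructor
  · intro u hu
    have hd : (u + 1) ^ 2 * (u ^ 2 - u + 1) ≠ 0 := by
      intro h
      apply hu
      have : (u ^ 2 - 1) * (u ^ 6 - 1) =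
          ((u + 1) ^ 2 * (u ^ 2 - u + 1)) * ((u - 1) * (u ^ 3 - 1)) := by ring
      rw [this, h, zero_mul]
    rw [groverZeta4, groverDet4_eq]
    rw [eq_div_iff hu, inv_mul_eq_div, div_eq_iff hd]
    ring
  · intro u hu
    have key : Matrix.det (1 - u⁻¹ • groverU4) =
        (u ^ 4)⁻¹ * Matrix.det (1 - u • groverU4) := by
      rw [groverDet4_eq, groverDet4_eq]
      field_simp
      ring
    rw [groverZeta4, groverZeta4, key, mul_inv, inv_inv]
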